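/- Let k ≥ 3. There exists a hypergraph sequence of k-uniform hypergraphs satisfying CD_{1/2}(k−2) but failing Dev(2). -/

import Mathlib

open Filter Finset Asymptotics

/-- A hypergraph sequence: for each `n`, the edge set of a hypergraph
on the vertex set `Fin n`. -/
abbrev HSeq : Type := (n : ℕ) → Finset (Finset (Fin n))

/-- The sequence is `k`-uniform: every edge has exactly `k` vertices. -/
def UniformSeq (k : ℕ) (H : HSeq) : Prop :=
  ∀ n : ℕ, ∀ e ∈ H n, e.card = k

/-- A proper partition of `k`: an (ordered list representing an unordered) collection of
at least two positive integers summing to `k`. -/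
def ProperPartition (k : ℕ) (π : List ℕ) : Prop :=
  2 ≤ π.length ∧ (∀ m ∈ π, 0 < m) ∧ π.sum = k

/-- `π'` is a refinement of `π`: there is a surjection `φ` from the parts of `π'`
to the parts of `π` so that each part of `π` is the sum of its `φ`-preimages. -/
def IsRefinement (π' π : List ℕ) : Prop :=
  ∃ φ : Fin π'.length → Fin π.length, Function.Surjective φ ∧
    ∀ i : Fin π.length, π.get i = ∑ j ∈ Finset.univ.filter (fun j => φ j = i), π'.get j

/-- `e(S_1, …, S_t)`: the number of tuples `(s_1, …, s_t) ∈ S_1 × ⋯ × S_t` whose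
union is an edge of `H`. -/
def eCount {n : ℕ} (H : Finset (Finset (Fin n))) {t : ℕ}
    (S : Fin t → Finset (Finset (Fin n))) : ℕ :=
  ((Fintype.piFinset S).filter (fun s => Finset.univ.biUnion s ∈ H)).card

/-- The property `Expand_p(π)` of a hypergraph sequence. -/
def Expand (k : ℕ) (p : ℝ) (π : List ℕ) (H : HSeq) : Prop :=
  ∃ f : ℕ → ℝ, f =o[atTop] (fun n => (n : ℝ) ^ k) ∧
    ∀ n : ℕ, ∀ S : Fin π.length → Finset (Finset (Fin n)),
      (∀ i : Fin π.length, ∀ s ∈ S i, s.card = π.get i) →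
      |(eCount (H n) S : ℝ) - p * ∏ i : Fin π.length, ((S i).card : ℝ)| ≤ f n

/-- The property `PartiteExpand_p(π)`: the `Expand` estimate is only required when the
vertex sets `V(S_i)` are pairwise disjoint. -/
def PartiteExpand (k : ℕ) (p : ℝ) (π : List ℕ) (H : HSeq) : Prop :=
  ∃ f : ℕ → ℝ, f =o[atTop] (fun n => (n : ℝ) ^ k) ∧
    ∀ n : ℕ, ∀ S : Fin π.length → Finset (Finset (Fin n)),
      (∀ i : Fin π.length, ∀ s ∈ S i, s.card = π.get i) →
      (∀ i j : Fin π.length, i ≠ j →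
        Disjoint ((S i).biUnion id) ((S j).biUnion id)) →
      |(eCount (H n) S : ℝ) - p * ∏ i : Fin π.length, ((S i).card : ℝ)| ≤ f n

/-- `K_k(G)`: the `k`-element vertex subsets all of whose `ℓ`-element subsets are
edges of the `ℓ`-uniform hypergraph `G`. -/
def cliqueSet (k ℓ : ℕ) {n : ℕ} (G : Finset (Finset (Fin n))) : Finset (Finset (Fin n)) :=
  (Finset.powersetCard k (Finset.univ : Finset (Fin n))).filter
    (fun T => ∀ S ∈ Finset.powersetCard ℓ T, S ∈ G)

/-- The property `CD_p(ℓ)` of a hypergraph sequence. -/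
def CD (k : ℕ) (p : ℝ) (ℓ : ℕ) (H : HSeq) : Prop :=
  ∃ f : ℕ → ℝ, f =o[atTop] (fun n => (n : ℝ) ^ k) ∧
    ∀ n : ℕ, ∀ G : Finset (Finset (Fin n)), (∀ e ∈ G, e.card = ℓ) →
      |(((cliqueSet k ℓ G) ∩ H n).card : ℝ) - p * ((cliqueSet k ℓ G).card : ℝ)| ≤ f n

/-- The property `CD_p(ℓ,s)` of a hypergraph sequence: `G` ranges over `ℓ`-uniform
hypergraphs whose vertex set `W` is a subset of `Fin n`, and one counts `k`-sets
inducing at least `s` edges of `G`. -/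
def CDs (k : ℕ) (p : ℝ) (ℓ s : ℕ) (H : HSeq) : Prop :=
  ∃ f : ℕ → ℝ, f =o[atTop] (fun n => (n : ℝ) ^ k) ∧
    ∀ n : ℕ, ∀ W : Finset (Fin n), ∀ G : Finset (Finset (Fin n)),
      (∀ e ∈ G, e.card = ℓ ∧ e ⊆ W) →
      |(((H n).filter (fun T => s ≤ (G.filter (fun e => e ⊆ T)).card)).card : ℝ) -
        p * (((Finset.powersetCard k W).filter
          (fun T => s ≤ (G.filter (fun e => e ⊆ T)).card)).card : ℝ)| ≤ f n

/-- The `k`-tuple `(x_1, …, x_{k-ℓ}, y_{1,ε_1}, …, y_{ℓ,ε_ℓ})`. -/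
def octTuple {n : ℕ} (k ℓ : ℕ) (x : Fin (k - ℓ) → Fin n) (y : Fin ℓ × Fin 2 → Fin n)
    (ε : Fin ℓ → Fin 2) (i : Fin k) : Fin n :=
  if h : (i : ℕ) < k - ℓ then x ⟨(i : ℕ), h⟩
  else
    have hi : (i : ℕ) - (k - ℓ) < ℓ := by have := i.isLt; omega
    y (⟨(i : ℕ) - (k - ℓ), hi⟩, ε ⟨(i : ℕ) - (k - ℓ), hi⟩)

/-- The squashed octahedron `O[x⃗, y⃗]`: the collection of `k`-element sets of the form
`{x_1, …, x_{k-ℓ}, y_{1,i_1}, …, y_{ℓ,i_ℓ}}`. -/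
def octSet {n : ℕ} (k ℓ : ℕ) (x : Fin (k - ℓ) → Fin n)
    (y : Fin ℓ × Fin 2 → Fin n) : Finset (Finset (Fin n)) :=
  (Finset.image (fun ε : Fin ℓ → Fin 2 =>
    Finset.image (octTuple k ℓ x y ε) Finset.univ) Finset.univ).filter
    (fun T => T.card = k)

/-- `Σ (−1)^{|O[x⃗,y⃗] ∩ E(H)|}` over all choices of vertices. -/
noncomputable def devSum (k ℓ : ℕ) {n : ℕ} (H : Finset (Finset (Fin n))) : ℝ :=
  ∑ x : Fin (k - ℓ) → Fin n, ∑ y : Fin ℓ × Fin 2 → Fin n,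
    (-1 : ℝ) ^ ((octSet k ℓ x y ∩ H).card)

/-- The property `Dev(ℓ)` of a hypergraph sequence. -/
def Dev (k ℓ : ℕ) (H : HSeq) : Prop :=
  (fun n => devSum k ℓ (H n)) =o[atTop] (fun n => (n : ℝ) ^ (k + ℓ))

open scoped Classical in
/-- `dev_{ℓ,P}(H)`: the deviation sum restricted to octahedra all of whose `k`-tuples
lie in `P`. -/
noncomputable def devP (k ℓ : ℕ) {n : ℕ} (H : Finset (Finset (Fin n)))
    (P : Set (Fin k → Fin n)) : ℝ :=
  ∑ x : Fin (k - ℓ) → Fin n, ∑ y : Fin ℓ × Fin 2 → Fin n,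
    if ∀ ε : Fin ℓ → Fin 2, octTuple k ℓ x y ε ∈ P then
      (-1 : ℝ) ^ ((octSet k ℓ x y ∩ H).card)
    else 0

/-- `Q ⊆ V(H)^k` is complete in coordinate `i`: membership in `Q` only depends on the
coordinates other than `i`. -/
def CompleteInCoord {n k : ℕ} (Q : Set (Fin k → Fin n)) (i : Fin k) : Prop :=
  ∃ Q' : Set ({j : Fin k // j ≠ i} → Fin n),
    Q = {z : Fin k → Fin n | (fun j : {j : Fin k // j ≠ i} => z j.1) ∈ Q'}



namespace CDnotDev

variable {Ω : Type*} [Fintype Ω] [DecidableEq Ω]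

/-- The signed sum `∑ A, ±w A` with sign `-1` when `ε A = true`. -/
def sgnSum (w : Ω → ℝ) (ε : Ω → Bool) : ℝ := ∑ A, (if ε A then -(w A) else w A)

lemma sgnSum_neg (w : Ω → ℝ) (ε : Ω → Bool) : sgnSum (fun A => -(w A)) ε = -(sgnSum w ε) := by
  unfold sgnSum
  rw [← Finset.sum_neg_distrib]
  refine Finset.sum_congr rfl fun A _ => ?_
  split <;> ring

lemma sgnSum_smul (c : ℝ) (w : Ω → ℝ) (ε : Ω → Bool) :
    sgnSum (fun A => c * w A) ε = c * sgnSum w ε := by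
  unfold sgnSum
  rw [Finset.mul_sum]
  refine Finset.sum_congr rfl fun A _ => ?_
  split <;> ring

lemma mgf_eq (w : Ω → ℝ) :
    ∑ ε : Ω → Bool, Real.exp (sgnSum w ε)
      = ∏ A : Ω, (Real.exp (-(w A)) + Real.exp (w A)) := by
  have h1 : ∀ ε : Ω → Bool, Real.exp (sgnSum w ε)
      = ∏ A : Ω, Real.exp (if ε A then -(w A) else w A) := by
    intro ε; rw [← Real.exp_sum]; rfl
  simp_rw [h1]
  have h2 := Finset.prod_univ_sum (fun _ : Ω => (Finset.univ : Finset Bool))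
      (fun A b => Real.exp (if b then -(w A) else w A))
  rw [Fintype.piFinset_univ] at h2
  rw [← h2]
  refine Finset.prod_congr rfl fun A _ => ?_
  simp [Fintype.sum_bool]

lemma mgf_le (w : Ω → ℝ) :
    ∑ ε : Ω → Bool, Real.exp (sgnSum w ε)
      ≤ 2 ^ (Fintype.card Ω) * Real.exp ((∑ A, (w A) ^ 2) / 2) := by
  rw [mgf_eq]
  calc ∏ A : Ω, (Real.exp (-(w A)) + Real.exp (w A))
      ≤ ∏ A : Ω, 2 * Real.exp ((w A) ^ 2 / 2) := by
        refine Finset.prod_le_prod (fun A _ => by positivity) (fun A _ => ?_)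
        have := Real.cosh_le_exp_half_sq (w A)
        rw [Real.cosh_eq] at this
        rw [add_comm]
        nlinarith [this]
    _ = 2 ^ (Fintype.card Ω) * Real.exp ((∑ A, (w A) ^ 2) / 2) := by
        rw [Finset.prod_mul_distrib, Finset.prod_const, ← Real.exp_sum, Finset.card_univ,
          Finset.sum_div]

lemma markov_count (w : Ω → ℝ) (t : ℝ) :
    ((Finset.univ.filter (fun ε : Ω → Bool => t ≤ sgnSum w ε)).card : ℝ) * Real.exp t
      ≤ ∑ ε : Ω → Bool, Real.exp (sgnSum w ε) := by
  have h1 : ((Finset.univ.filter (fun ε : Ω → Bool => t ≤ sgnSum w ε)).card : ℝ) * Real.exp t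
      = ∑ _ε ∈ Finset.univ.filter (fun ε : Ω → Bool => t ≤ sgnSum w ε), Real.exp t := by
    rw [Finset.sum_const, nsmul_eq_mul]
  rw [h1]
  calc ∑ ε ∈ Finset.univ.filter (fun ε : Ω → Bool => t ≤ sgnSum w ε), Real.exp t
      ≤ ∑ ε ∈ Finset.univ.filter (fun ε : Ω → Bool => t ≤ sgnSum w ε), Real.exp (sgnSum w ε) :=
        Finset.sum_le_sum fun ε hε => Real.exp_le_exp.2 (Finset.mem_filter.1 hε).2
    _ ≤ ∑ ε : Ω → Bool, Real.exp (sgnSum w ε) :=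
        Finset.sum_le_sum_of_subset_of_nonneg (Finset.subset_univ _)
          (fun ε _ _ => (Real.exp_pos _).le)

/-- Chernoff-type counting bound. -/
lemma chernoff_count (w : Ω → ℝ) (t l S : ℝ) (hl : 0 ≤ l) (hS : ∑ A, (w A) ^ 2 ≤ S) :
    ((Finset.univ.filter (fun ε : Ω → Bool => t ≤ sgnSum w ε)).card : ℝ)
      ≤ 2 ^ (Fintype.card Ω) * Real.exp (l ^ 2 * S / 2 - l * t) := by
  have hsub : (Finset.univ.filter (fun ε : Ω → Bool => t ≤ sgnSum w ε))
      ⊆ (Finset.univ.filter (fun ε : Ω → Bool => l * t ≤ sgnSum (fun A => l * w A) ε)) := by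
    intro ε hε
    rw [Finset.mem_filter] at hε ⊢
    exact ⟨hε.1, by rw [sgnSum_smul]; exact mul_le_mul_of_nonneg_left hε.2 hl⟩
  have h1 : ((Finset.univ.filter (fun ε : Ω → Bool => t ≤ sgnSum w ε)).card : ℝ)
      ≤ ((Finset.univ.filter
          (fun ε : Ω → Bool => l * t ≤ sgnSum (fun A => l * w A) ε)).card : ℝ) := by
    exact_mod_cast Finset.card_le_card hsub
  have h2 := markov_count (fun A => l * w A) (l * t)
  have h3 := mgf_le (fun A => l * w A)
  have h4 : (∑ A, (l * w A) ^ 2) / 2 ≤ l ^ 2 * S / 2 := by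
    have : ∑ A, (l * w A) ^ 2 = l ^ 2 * ∑ A, (w A) ^ 2 := by
      rw [Finset.mul_sum]; exact Finset.sum_congr rfl fun A _ => by ring
    rw [this]
    have hl2 : (0:ℝ) ≤ l ^ 2 := sq_nonneg l
    nlinarith [mul_le_mul_of_nonneg_left hS hl2]
  have hexp : Real.exp ((∑ A, (l * w A) ^ 2) / 2) ≤ Real.exp (l ^ 2 * S / 2) :=
    Real.exp_le_exp.2 h4
  have h5 : ((Finset.univ.filter
      (fun ε : Ω → Bool => l * t ≤ sgnSum (fun A => l * w A) ε)).card : ℝ) * Real.exp (l * t)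
      ≤ 2 ^ (Fintype.card Ω) * Real.exp (l ^ 2 * S / 2) := by
    calc _ ≤ ∑ ε : Ω → Bool, Real.exp (sgnSum (fun A => l * w A) ε) := h2
      _ ≤ 2 ^ (Fintype.card Ω) * Real.exp ((∑ A, (l * w A) ^ 2) / 2) := h3
      _ ≤ 2 ^ (Fintype.card Ω) * Real.exp (l ^ 2 * S / 2) := by
          exact mul_le_mul_of_nonneg_left hexp (by positivity)
  have hepos : (0:ℝ) < Real.exp (l * t) := Real.exp_pos _
  calc ((Finset.univ.filter (fun ε : Ω → Bool => t ≤ sgnSum w ε)).card : ℝ)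
      ≤ ((Finset.univ.filter
          (fun ε : Ω → Bool => l * t ≤ sgnSum (fun A => l * w A) ε)).card : ℝ) := h1
    _ ≤ 2 ^ (Fintype.card Ω) * Real.exp (l ^ 2 * S / 2) / Real.exp (l * t) := by
        rw [le_div_iff₀ hepos]; exact h5
    _ = 2 ^ (Fintype.card Ω) * Real.exp (l ^ 2 * S / 2 - l * t) := by
        rw [Real.exp_sub]; ring


/-- everything except the maximum -/
def base {n : ℕ} (T : Finset (Fin n)) : Finset (Fin n) :=
  T.filter (fun v => ∃ u ∈ T, v < u)

lemma base_subset {n : ℕ} (T : Finset (Fin n)) : base T ⊆ T := Finset.filter_subset _ _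

lemma base_insert {n : ℕ} {S : Finset (Fin n)} {u : Fin n} (h : ∀ v ∈ S, v < u) :
    base (insert u S) = S := by
  ext v
  simp only [base, Finset.mem_filter, Finset.mem_insert]
  constructor
  · rintro ⟨rfl | hv, w, rfl | hw, hvw⟩
    · exact absurd hvw (lt_irrefl _)
    · exact absurd hvw (lt_asymm (h w hw))
    · exact hv
    · exact hv
  · intro hv
    exact ⟨Or.inr hv, u, Or.inl rfl, h v hv⟩

lemma base_card {n m : ℕ} {T : Finset (Fin n)} (hT : T.card = m) (hm : 0 < m) :
    (base T).card = m - 1 := by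
  have hne : T.Nonempty := Finset.card_pos.mp (hT ▸ hm)
  have hbe : base T = T.erase (T.max' hne) := by
    ext v
    simp only [base, Finset.mem_filter, Finset.mem_erase]
    constructor
    · rintro ⟨hv, u, hu, hvu⟩
      refine ⟨fun hvm => ?_, hv⟩
      exact absurd (lt_of_lt_of_le hvu (T.le_max' u hu)) (hvm ▸ lt_irrefl _)
    · rintro ⟨hvm, hv⟩
      exact ⟨hv, T.max' hne, T.max'_mem hne, lt_of_le_of_ne (T.le_max' v hv) hvm⟩
  rw [hbe, Finset.card_erase_of_mem (T.max'_mem hne), hT]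

lemma mem_cliqueSet_card {k ℓ n : ℕ} {G : Finset (Finset (Fin n))} {T : Finset (Fin n)}
    (hT : T ∈ cliqueSet k ℓ G) : T.card = k :=
  (Finset.mem_powersetCard.1 (Finset.mem_filter.1 hT).1).2

/-- the weight of a `(k-1)`-set: number of cliques with this base -/
def wCD (k : ℕ) {n : ℕ} (G : Finset (Finset (Fin n))) (A : Finset (Fin n)) : ℝ :=
  (((cliqueSet k (k - 2) G).filter (fun T => base T = A)).card : ℝ)


lemma sum_chi_eq_sgnSum (k : ℕ) {n : ℕ} (G : Finset (Finset (Fin n)))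
    (ε : Finset (Fin n) → Bool) :
    ∑ T ∈ cliqueSet k (k - 2) G, (if ε (base T) then (-1 : ℝ) else 1)
      = sgnSum (wCD k G) ε := by
  unfold sgnSum
  rw [← Finset.sum_fiberwise (cliqueSet k (k - 2) G) (fun T => base T)
      (fun T => if ε (base T) then (-1 : ℝ) else 1)]
  refine Finset.sum_congr rfl fun A _ => ?_
  have h1 : ∀ T ∈ (cliqueSet k (k - 2) G).filter (fun T => base T = A),
      (if ε (base T) then (-1 : ℝ) else 1) = (if ε A then (-1 : ℝ) else 1) := by
    intro T hT
    rw [(Finset.mem_filter.1 hT).2]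
  rw [Finset.sum_congr rfl h1, Finset.sum_const, nsmul_eq_mul, wCD]
  split <;> ring

lemma wCD_nonneg (k : ℕ) {n : ℕ} (G : Finset (Finset (Fin n))) (A : Finset (Fin n)) :
    0 ≤ wCD k G A := Nat.cast_nonneg _

lemma wCD_le (k : ℕ) (hk : 0 < k) {n : ℕ} (G : Finset (Finset (Fin n))) (A : Finset (Fin n)) :
    wCD k G A ≤ (n : ℝ) := by
  unfold wCD
  have hcard : ((cliqueSet k (k - 2) G).filter (fun T => base T = A)).card ≤ n := by
    have h1 : ((cliqueSet k (k - 2) G).filter (fun T => base T = A)).card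
        ≤ (Finset.powersetCard 1 (Finset.univ : Finset (Fin n))).card := by
      refine Finset.card_le_card_of_injOn (fun T => T \ A) ?_ ?_
      · intro T hT
        rw [Finset.mem_coe, Finset.mem_filter] at hT
        have hTk : T.card = k := mem_cliqueSet_card hT.1
        have hA : A ⊆ T := hT.2 ▸ base_subset T
        have hAc : A.card = k - 1 := hT.2 ▸ base_card hTk hk
        rw [Finset.mem_coe, Finset.mem_powersetCard]
        refine ⟨Finset.subset_univ _, ?_⟩
        rw [Finset.card_sdiff_of_subset hA, hTk, hAc]
        omega
      · intro T₁ h₁ T₂ h₂ heq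
        simp only [Finset.coe_filter, Set.mem_setOf_eq] at h₁ h₂
        have hA₁ : A ⊆ T₁ := h₁.2 ▸ base_subset T₁
        have hA₂ : A ⊆ T₂ := h₂.2 ▸ base_subset T₂
        have heq' : T₁ \ A = T₂ \ A := heq
        calc T₁ = A ∪ T₁ \ A := (Finset.union_sdiff_of_subset hA₁).symm
          _ = A ∪ T₂ \ A := by rw [heq']
          _ = T₂ := Finset.union_sdiff_of_subset hA₂
    rwa [Finset.card_powersetCard, Finset.card_univ, Fintype.card_fin, Nat.choose_one_right] at h1
  exact_mod_cast hcard

lemma sum_wCD_le (k : ℕ) {n : ℕ} (G : Finset (Finset (Fin n))) :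
    ∑ A : Finset (Fin n), wCD k G A ≤ (n : ℝ) ^ k := by
  have h1 : ∑ A : Finset (Fin n), wCD k G A = ((cliqueSet k (k - 2) G).card : ℝ) := by
    unfold wCD
    rw [← Nat.cast_sum]
    congr 1
    rw [← Finset.card_eq_sum_card_fiberwise (f := fun T => base T)
      (t := (Finset.univ : Finset (Finset (Fin n)))) (fun _ _ => Finset.mem_univ _)]
  rw [h1]
  have h2 : (cliqueSet k (k - 2) G).card ≤ n ^ k := by
    calc (cliqueSet k (k - 2) G).card
        ≤ (Finset.powersetCard k (Finset.univ : Finset (Fin n))).card :=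
          Finset.card_filter_le _ _
      _ = (n).choose k := by rw [Finset.card_powersetCard, Finset.card_univ, Fintype.card_fin]
      _ ≤ n ^ k := Nat.choose_le_pow n k
  exact_mod_cast h2

lemma sum_wCD_sq_le (k : ℕ) (hk : 0 < k) {n : ℕ} (G : Finset (Finset (Fin n))) :
    ∑ A : Finset (Fin n), (wCD k G A) ^ 2 ≤ (n : ℝ) ^ (k + 1) := by
  calc ∑ A : Finset (Fin n), (wCD k G A) ^ 2
      ≤ ∑ A : Finset (Fin n), (n : ℝ) * wCD k G A := by
        refine Finset.sum_le_sum fun A _ => ?_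
        have h1 := wCD_le k hk G A
        have h2 := wCD_nonneg k G A
        nlinarith
    _ = (n : ℝ) * ∑ A : Finset (Fin n), wCD k G A := by rw [Finset.mul_sum]
    _ ≤ (n : ℝ) * (n : ℝ) ^ k := by
        exact mul_le_mul_of_nonneg_left (sum_wCD_le k G) (Nat.cast_nonneg n)
    _ = (n : ℝ) ^ (k + 1) := by ring


noncomputable def thr (k n : ℕ) : ℝ := 2 * Real.sqrt ((n : ℝ) ^ (2 * k - 1))

lemma thr_nonneg (k n : ℕ) : 0 ≤ thr k n := by unfold thr; positivity

def GoodEps (k n : ℕ) (ε : Finset (Fin n) → Bool) : Prop :=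
  ∀ G ∈ (Finset.powersetCard (k - 2) (Finset.univ : Finset (Fin n))).powerset,
    |sgnSum (wCD k G) ε| ≤ thr k n

lemma exists_goodEps (k : ℕ) (hk : 3 ≤ k) (n : ℕ) : ∃ ε, GoodEps k n ε := by
  classical
  rcases Nat.eq_zero_or_pos n with hn | hn
  · subst hn
    refine ⟨fun _ => true, fun G _ => ?_⟩
    have hcs : cliqueSet k (k - 2) G = ∅ := by
      rw [Finset.eq_empty_iff_forall_notMem]
      intro T hT
      have h1 := mem_cliqueSet_card hT
      have h2 : T.card ≤ 0 := by
        have := Finset.card_le_card (Finset.subset_univ T)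
        simpa using this
      omega
    have hw : ∀ A, wCD k G A = 0 := by
      intro A; unfold wCD; rw [hcs]; simp
    have hz : sgnSum (wCD k G) (fun _ => true) = 0 := by
      unfold sgnSum
      refine Finset.sum_eq_zero fun A _ => by rw [hw A]; simp
    rw [hz, thr]
    simp
  · by_contra hcon
    push_neg at hcon
    set t := thr k n with ht
    set l := t / (n : ℝ) ^ (k + 1) with hl
    have hnR : (1 : ℝ) ≤ (n : ℝ) := by exact_mod_cast hn
    have hnpos : (0 : ℝ) < (n : ℝ) := by linarith
    have htpos : 0 ≤ t := thr_nonneg k n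
    have hlpos : 0 ≤ l := by rw [hl]; positivity
    have ht2 : t ^ 2 = 4 * (n : ℝ) ^ (2 * k - 1) := by
      rw [ht, thr, mul_pow, Real.sq_sqrt (by positivity)]
      norm_num
    have hpowsplit : (n : ℝ) ^ (2 * k - 1) = (n : ℝ) ^ (k + 1) * (n : ℝ) ^ (k - 2) := by
      rw [← pow_add]; congr 1; omega
    have hside : ∀ w : Finset (Fin n) → ℝ, (∑ A, (w A) ^ 2 ≤ (n : ℝ) ^ (k + 1)) →
        ((Finset.univ.filter
            (fun ε : Finset (Fin n) → Bool => t ≤ sgnSum w ε)).card : ℝ)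
          ≤ 2 ^ (Fintype.card (Finset (Fin n))) * Real.exp (-(2 * (n : ℝ) ^ (k - 2))) := by
      intro w hw
      refine (chernoff_count w t l ((n : ℝ) ^ (k + 1)) hlpos hw).trans ?_
      refine mul_le_mul_of_nonneg_left (Real.exp_le_exp.2 (le_of_eq ?_)) (by positivity)
      have hSpos : (0 : ℝ) < (n : ℝ) ^ (k + 1) := by positivity
      have e1 : l ^ 2 * ((n : ℝ) ^ (k + 1)) / 2 - l * t = -(t ^ 2 / (2 * (n : ℝ) ^ (k + 1))) := by
        rw [hl]; field_simp; ring
      rw [e1, ht2, hpowsplit]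
      field_simp
      ring
    set 𝒢 := (Finset.powersetCard (k - 2) (Finset.univ : Finset (Fin n))).powerset with h𝒢
    set Bnd := 2 ^ (Fintype.card (Finset (Fin n))) * Real.exp (-(2 * (n : ℝ) ^ (k - 2)))
      with hBnd
    have hbig : (Finset.univ : Finset (Finset (Fin n) → Bool)) ⊆
        𝒢.biUnion (fun G =>
          (Finset.univ.filter (fun ε => t ≤ sgnSum (wCD k G) ε)) ∪
          (Finset.univ.filter (fun ε => t ≤ sgnSum (fun A => -(wCD k G A)) ε))) := by
      intro ε _
      have hbad := hcon ε
      rw [GoodEps] at hbad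
      push_neg at hbad
      obtain ⟨G, hG, hgt⟩ := hbad
      refine Finset.mem_biUnion.2 ⟨G, hG, ?_⟩
      rw [Finset.mem_union]
      rcases lt_abs.1 hgt with h | h
      · exact Or.inl (Finset.mem_filter.2 ⟨Finset.mem_univ _, h.le⟩)
      · refine Or.inr (Finset.mem_filter.2 ⟨Finset.mem_univ _, ?_⟩)
        rw [sgnSum_neg]
        linarith
    have hcard : ((Finset.univ : Finset (Finset (Fin n) → Bool)).card : ℝ)
        ≤ (𝒢.card : ℝ) * (2 * Bnd) := by
      have h1 := Finset.card_le_card hbig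
      have h2 := Finset.card_biUnion_le (s := 𝒢) (t := fun G =>
          (Finset.univ.filter (fun ε => t ≤ sgnSum (wCD k G) ε)) ∪
          (Finset.univ.filter (fun ε => t ≤ sgnSum (fun A => -(wCD k G A)) ε)))
      have h3 : ((Finset.univ : Finset (Finset (Fin n) → Bool)).card : ℝ)
          ≤ ∑ G ∈ 𝒢, ((((Finset.univ.filter (fun ε => t ≤ sgnSum (wCD k G) ε)) ∪
              (Finset.univ.filter
                (fun ε => t ≤ sgnSum (fun A => -(wCD k G A)) ε))).card : ℕ) : ℝ) := by
        rw [← Nat.cast_sum]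
        exact_mod_cast le_trans h1 h2
      refine h3.trans ?_
      have h4 : ∀ G ∈ 𝒢, ((((Finset.univ.filter (fun ε => t ≤ sgnSum (wCD k G) ε)) ∪
              (Finset.univ.filter
                (fun ε => t ≤ sgnSum (fun A => -(wCD k G A)) ε))).card : ℕ) : ℝ) ≤ 2 * Bnd := by
        intro G _
        have hA := hside (wCD k G) (sum_wCD_sq_le k (by omega) G)
        have hB := hside (fun A => -(wCD k G A)) (by
          have := sum_wCD_sq_le k (by omega : 0 < k) G
          simpa using this)
        have hu := Finset.card_union_le
            (Finset.univ.filter (fun ε => t ≤ sgnSum (wCD k G) ε))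
            (Finset.univ.filter (fun ε => t ≤ sgnSum (fun A => -(wCD k G A)) ε))
        have hu' : ((((Finset.univ.filter (fun ε => t ≤ sgnSum (wCD k G) ε)) ∪
              (Finset.univ.filter
                (fun ε => t ≤ sgnSum (fun A => -(wCD k G A)) ε))).card : ℕ) : ℝ)
            ≤ ((Finset.univ.filter (fun ε => t ≤ sgnSum (wCD k G) ε)).card : ℝ)
              + ((Finset.univ.filter
                  (fun ε => t ≤ sgnSum (fun A => -(wCD k G A)) ε)).card : ℝ) := by
          exact_mod_cast hu
        rw [hBnd]
        linarith
      calc ∑ G ∈ 𝒢, ((((Finset.univ.filter (fun ε => t ≤ sgnSum (wCD k G) ε)) ∪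
              (Finset.univ.filter
                (fun ε => t ≤ sgnSum (fun A => -(wCD k G A)) ε))).card : ℕ) : ℝ)
          ≤ ∑ _G ∈ 𝒢, 2 * Bnd := Finset.sum_le_sum h4
        _ = (𝒢.card : ℝ) * (2 * Bnd) := by rw [Finset.sum_const, nsmul_eq_mul]
    -- now derive numeric contradiction
    have hNcard : ((Finset.univ : Finset (Finset (Fin n) → Bool)).card : ℝ)
        = 2 ^ (Fintype.card (Finset (Fin n))) := by
      rw [Finset.card_univ, Fintype.card_fun, Fintype.card_bool]
      push_cast
      ring
    have h𝒢card : (𝒢.card : ℝ) = 2 ^ (n.choose (k - 2)) := by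
      rw [h𝒢, Finset.card_powerset, Finset.card_powersetCard, Finset.card_univ,
        Fintype.card_fin]
      push_cast
      ring
    set M := n.choose (k - 2) with hM
    have hone : (1 : ℝ) ≤ 2 ^ (M + 1) * Real.exp (-(2 * (n : ℝ) ^ (k - 2))) := by
      have hNpos : (0 : ℝ) < 2 ^ (Fintype.card (Finset (Fin n))) := by positivity
      rw [hNcard, h𝒢card, hBnd] at hcard
      have : (1 : ℝ) * 2 ^ (Fintype.card (Finset (Fin n)))
          ≤ (2 ^ (M + 1) * Real.exp (-(2 * (n : ℝ) ^ (k - 2))))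
            * 2 ^ (Fintype.card (Finset (Fin n))) := by
        calc (1 : ℝ) * 2 ^ (Fintype.card (Finset (Fin n)))
            = (2 ^ (Fintype.card (Finset (Fin n))) : ℝ) := by ring
          _ ≤ (2 ^ M : ℝ) * (2 * (2 ^ (Fintype.card (Finset (Fin n)))
              * Real.exp (-(2 * (n : ℝ) ^ (k - 2))))) := hcard
          _ = (2 ^ (M + 1) * Real.exp (-(2 * (n : ℝ) ^ (k - 2))))
              * 2 ^ (Fintype.card (Finset (Fin n))) := by ring
      exact le_of_mul_le_mul_right (by linarith [this]) hNpos
    have hlt : 2 ^ (M + 1) * Real.exp (-(2 * (n : ℝ) ^ (k - 2))) < 1 := by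
      have e2 : (2 : ℝ) ^ (M + 1) = Real.exp ((M + 1 : ℕ) * Real.log 2) := by
        rw [Real.exp_nat_mul, Real.exp_log (by norm_num : (0:ℝ) < 2)]
      rw [e2, ← Real.exp_add, Real.exp_lt_one_iff]
      have hMle : (M : ℝ) ≤ (n : ℝ) ^ (k - 2) := by
        have h := Nat.choose_le_pow n (k - 2)
        exact_mod_cast h
      have honep : (1 : ℝ) ≤ (n : ℝ) ^ (k - 2) := one_le_pow₀ hnR
      have hlog2 : Real.log 2 < 0.6931471808 := Real.log_two_lt_d9
      have hlog2p : 0 ≤ Real.log 2 := Real.log_nonneg (by norm_num)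
      push_cast
      nlinarith [hMle, honep, hlog2, hlog2p, Nat.cast_nonneg (α := ℝ) M]
    linarith

open scoped Classical in
noncomputable def goodEps (k n : ℕ) : Finset (Fin n) → Bool :=
  if h : ∃ ε, GoodEps k n ε then h.choose else fun _ => true

lemma goodEps_spec (k : ℕ) (hk : 3 ≤ k) (n : ℕ) : GoodEps k n (goodEps k n) := by
  unfold goodEps
  split
  · next h => exact h.choose_spec
  · next h => exact absurd (exists_goodEps k hk n) h

/-- The counterexample hypergraph sequence. -/
noncomputable def Hcd (k : ℕ) : HSeq := fun n =>
  (Finset.powersetCard k (Finset.univ : Finset (Fin n))).filter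
    (fun T => goodEps k n (base T) = true)

lemma mem_Hcd {k n : ℕ} {T : Finset (Fin n)} :
    T ∈ Hcd k n ↔ T.card = k ∧ goodEps k n (base T) = true := by
  simp [Hcd, Finset.mem_powersetCard, Finset.subset_univ]

lemma Hcd_uniform (k : ℕ) : UniformSeq k (Hcd k) := fun _n _e he => (mem_Hcd.1 he).1


lemma littleO_sqrt (k : ℕ) (hk : 1 ≤ k) :
    (fun n : ℕ => Real.sqrt ((n : ℝ) ^ (2 * k - 1))) =o[atTop] (fun n : ℕ => (n : ℝ) ^ k) := by
  rw [Asymptotics.isLittleO_iff]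
  intro c hc
  filter_upwards [Filter.eventually_ge_atTop (⌈(4 : ℝ) / c ^ 2⌉₊ + 1)] with n hn
  have hn1 : 1 ≤ n := le_trans (by omega) hn
  have hnR : (1 : ℝ) ≤ (n : ℝ) := by exact_mod_cast hn1
  have hge : (4 : ℝ) / c ^ 2 ≤ (n : ℝ) := by
    have h1 : ⌈(4 : ℝ) / c ^ 2⌉₊ ≤ n := by omega
    calc (4 : ℝ) / c ^ 2 ≤ (⌈(4 : ℝ) / c ^ 2⌉₊ : ℝ) := Nat.le_ceil _
      _ ≤ (n : ℝ) := by exact_mod_cast h1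
  rw [Real.norm_eq_abs, Real.norm_eq_abs, abs_of_nonneg (Real.sqrt_nonneg _),
    abs_of_nonneg (by positivity)]
  have hc2 : (4 : ℝ) ≤ c ^ 2 * n := by
    have h2 : c ^ 2 * ((4 : ℝ) / c ^ 2) ≤ c ^ 2 * n :=
      mul_le_mul_of_nonneg_left hge (sq_nonneg c)
    have e : c ^ 2 * ((4 : ℝ) / c ^ 2) = 4 := by field_simp
    linarith
  have h1 : Real.sqrt ((n : ℝ) ^ (2 * k - 1)) ≤ Real.sqrt (c ^ 2 * ((n : ℝ) ^ k) ^ 2) := by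
    apply Real.sqrt_le_sqrt
    rw [← pow_mul]
    have hsplit : (n : ℝ) ^ (k * 2) = (n : ℝ) ^ (2 * k - 1) * n := by
      rw [← pow_succ]; congr 1; omega
    have hp : (0 : ℝ) ≤ (n : ℝ) ^ (2 * k - 1) := by positivity
    calc (n : ℝ) ^ (2 * k - 1) = (n : ℝ) ^ (2 * k - 1) * 1 := by ring
      _ ≤ (n : ℝ) ^ (2 * k - 1) * (c ^ 2 * n) := by nlinarith
      _ = c ^ 2 * (n : ℝ) ^ (k * 2) := by rw [hsplit]; ring
  rwa [Real.sqrt_mul (sq_nonneg c), Real.sqrt_sq hc.le,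
    Real.sqrt_sq (by positivity : (0:ℝ) ≤ (n : ℝ) ^ k)] at h1

lemma Hcd_CD (k : ℕ) (hk : 3 ≤ k) : CD k (1 / 2 : ℝ) (k - 2) (Hcd k) := by
  classical
  refine ⟨fun n => Real.sqrt ((n : ℝ) ^ (2 * k - 1)), littleO_sqrt k (by omega), ?_⟩
  intro n G hG
  have hGin : G ∈ (Finset.powersetCard (k - 2) (Finset.univ : Finset (Fin n))).powerset :=
    Finset.mem_powerset.2
      (fun e he => Finset.mem_powersetCard.2 ⟨Finset.subset_univ _, hG e he⟩)
  have key := goodEps_spec k hk n G hGin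
  set K := cliqueSet k (k - 2) G with hK
  have hinter : (((K ∩ Hcd k n).card : ℕ) : ℝ)
      = ∑ T ∈ K, (if goodEps k n (base T) then (1 : ℝ) else 0) := by
    rw [← Finset.filter_mem_eq_inter, Finset.card_filter]
    push_cast
    refine Finset.sum_congr rfl fun T hT => ?_
    have hTk : T.card = k := mem_cliqueSet_card hT
    by_cases hgb : goodEps k n (base T) = true
    · rw [if_pos (mem_Hcd.2 ⟨hTk, hgb⟩), if_pos hgb]
    · rw [if_neg (fun hmem => hgb (mem_Hcd.1 hmem).2), if_neg hgb]
  have hKcard : ((K.card : ℕ) : ℝ) = ∑ _T ∈ K, (1 : ℝ) := by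
    rw [Finset.sum_const, nsmul_eq_mul, mul_one]
  rw [hinter, hKcard]
  have hdiff : ∑ T ∈ K, (if goodEps k n (base T) then (1 : ℝ) else 0)
      - 1 / 2 * ∑ _T ∈ K, (1 : ℝ)
      = (-(1 / 2)) * ∑ T ∈ K, (if goodEps k n (base T) then (-1 : ℝ) else 1) := by
    rw [Finset.mul_sum, Finset.mul_sum, ← Finset.sum_sub_distrib]
    refine Finset.sum_congr rfl fun T _ => ?_
    split <;> ring
  rw [hdiff, abs_mul, hK, sum_chi_eq_sgnSum]
  calc |(-(1 / 2) : ℝ)| * |sgnSum (wCD k G) (goodEps k n)|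
      ≤ |(-(1 / 2) : ℝ)| * thr k n := mul_le_mul_of_nonneg_left key (abs_nonneg _)
    _ = Real.sqrt ((n : ℝ) ^ (2 * k - 1)) := by
        rw [thr, abs_neg, abs_of_nonneg (by norm_num : (0 : ℝ) ≤ 1 / 2)]; ring

/-- the "link sign" -/
noncomputable def chi (k n : ℕ) (T : Finset (Fin n)) : ℝ := if T ∈ Hcd k n then -1 else 1

lemma chi_abs (k n : ℕ) (T : Finset (Fin n)) : |chi k n T| = 1 := by
  unfold chi; split <;> simp

def Aset {n m : ℕ} (x : Fin m → Fin n) : Finset (Fin n) := Finset.image x Finset.univ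

def Bset {n m : ℕ} (x : Fin m → Fin n) (u v : Fin n) : Finset (Fin n) :=
  insert u (insert v (Aset x))

lemma octTuple_image {k n : ℕ} (hk : 3 ≤ k) (x : Fin (k - 2) → Fin n)
    (y : Fin 2 × Fin 2 → Fin n) (ε : Fin 2 → Fin 2) :
    Finset.image (octTuple k 2 x y ε) Finset.univ = Bset x (y (0, ε 0)) (y (1, ε 1)) := by
  ext a
  simp only [Bset, Aset, Finset.mem_image, Finset.mem_insert, Finset.mem_univ, true_and]
  constructor
  · rintro ⟨i, rfl⟩
    by_cases h : (i : ℕ) < k - 2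
    · right; right
      refine ⟨⟨(i : ℕ), h⟩, ?_⟩
      rw [octTuple, dif_pos h]
    · have hi2 : (i : ℕ) - (k - 2) < 2 := by have := i.isLt; omega
      have hcase : (i : ℕ) - (k - 2) = 0 ∨ (i : ℕ) - (k - 2) = 1 := by omega
      rcases hcase with h0 | h1
      · left
        rw [octTuple, dif_neg h]
        have he : (⟨(i : ℕ) - (k - 2), hi2⟩ : Fin 2) = 0 := Fin.ext (by simp [h0])
        exact congrArg y (Prod.ext he (congrArg ε he))
      · right; left
        rw [octTuple, dif_neg h]
        have he : (⟨(i : ℕ) - (k - 2), hi2⟩ : Fin 2) = 1 := Fin.ext (by simp [h1])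
        exact congrArg y (Prod.ext he (congrArg ε he))
  · rintro (rfl | rfl | ⟨j, rfl⟩)
    · refine ⟨⟨k - 2, by omega⟩, ?_⟩
      rw [octTuple, dif_neg (by simp)]
      have he : (⟨(k - 2 : ℕ) - (k - 2), by omega⟩ : Fin 2) = 0 := Fin.ext (by simp)
      exact congrArg y (Prod.ext he (congrArg ε he))
    · refine ⟨⟨k - 1, by omega⟩, ?_⟩
      rw [octTuple, dif_neg (by simp; omega)]
      have he : (⟨(k - 1 : ℕ) - (k - 2), by omega⟩ : Fin 2) = 1 := Fin.ext (by simp; omega)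
      exact congrArg y (Prod.ext he (congrArg ε he))
    · refine ⟨⟨(j : ℕ), by have := j.isLt; omega⟩, ?_⟩
      rw [octTuple, dif_pos (by simpa using j.isLt)]

lemma chi_Bset (k n : ℕ) {x : Fin (k - 2) → Fin n} {u v : Fin n}
    (hu : ∀ w ∈ insert v (Aset x), w < u) :
    chi k n (Bset x u v)
      = (if (insert v (Aset x)).card + 1 = k ∧ goodEps k n (insert v (Aset x)) = true
          then (-1 : ℝ) else 1) := by
  have hnotmem : u ∉ insert v (Aset x) := fun hm => absurd (hu u hm) (lt_irrefl u)
  have hbase : base (Bset x u v) = insert v (Aset x) := base_insert hu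
  have hcard : (Bset x u v).card = (insert v (Aset x)).card + 1 :=
    Finset.card_insert_of_notMem hnotmem
  unfold chi
  by_cases hmem : Bset x u v ∈ Hcd k n
  · rw [if_pos hmem]
    obtain ⟨h1, h2⟩ := mem_Hcd.1 hmem
    rw [if_pos ⟨by omega, by rwa [← hbase]⟩]
  · rw [if_neg hmem]
    rw [if_neg]
    intro ⟨h1, h2⟩
    exact hmem (mem_Hcd.2 ⟨by omega, by rwa [hbase]⟩)

lemma linkprod_one (k n : ℕ) {x : Fin (k - 2) → Fin n} {u₀ u₁ v : Fin n}
    (hu₀ : ∀ w ∈ insert v (Aset x), w < u₀) (hu₁ : ∀ w ∈ insert v (Aset x), w < u₁) :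
    chi k n (Bset x u₀ v) * chi k n (Bset x u₁ v) = 1 := by
  rw [chi_Bset k n hu₀, chi_Bset k n hu₁]
  split <;> norm_num

section GoodCase

variable {k n : ℕ} {x : Fin (k - 2) → Fin n} {y : Fin 2 × Fin 2 → Fin n}

lemma y_ne_Aset (hgood : Function.Injective (Sum.elim x y)) (p : Fin 2 × Fin 2) :
    y p ∉ Aset x := by
  intro hmem
  obtain ⟨j, _, hj⟩ := Finset.mem_image.1 hmem
  exact Sum.inl_ne_inr (hgood (show Sum.elim x y (Sum.inl j) = Sum.elim x y (Sum.inr p) from hj))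

lemma y_ne_y (hgood : Function.Injective (Sum.elim x y)) {p q : Fin 2 × Fin 2} (hpq : p ≠ q) :
    y p ≠ y q := by
  intro he
  exact hpq (Sum.inr_injective
    (hgood (show Sum.elim x y (Sum.inr p) = Sum.elim x y (Sum.inr q) from he)))

lemma card_Aset (hgood : Function.Injective (Sum.elim x y)) : (Aset x).card = k - 2 := by
  have hxinj : Function.Injective x := by
    intro a b hab
    have := hgood (show Sum.elim x y (Sum.inl a) = Sum.elim x y (Sum.inl b) from hab)
    exact Sum.inl_injective this
  rw [Aset, Finset.card_image_of_injective _ hxinj, Finset.card_univ, Fintype.card_fin]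

lemma card_Bset_good (hk : 3 ≤ k) (hgood : Function.Injective (Sum.elim x y))
    (ε : Fin 2 → Fin 2) : (Bset x (y (0, ε 0)) (y (1, ε 1))).card = k := by
  have h1 : y (1, ε 1) ∉ Aset x := y_ne_Aset hgood _
  have h2 : y (0, ε 0) ∉ insert (y (1, ε 1)) (Aset x) := by
    intro hmem
    rcases Finset.mem_insert.1 hmem with he | hmem'
    · exact y_ne_y hgood (by simp [Prod.ext_iff]) he
    · exact y_ne_Aset hgood _ hmem'
  rw [Bset, Finset.card_insert_of_notMem h2, Finset.card_insert_of_notMem h1,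
    card_Aset hgood]
  omega

lemma Bfun_inj (hgood : Function.Injective (Sum.elim x y)) :
    Function.Injective (fun ε : Fin 2 → Fin 2 => Bset x (y (0, ε 0)) (y (1, ε 1))) := by
  intro ε ε' heq
  simp only [Bset] at heq
  have h0 : ε 0 = ε' 0 := by
    have hm : y (0, ε 0) ∈ insert (y (0, ε' 0)) (insert (y (1, ε' 1)) (Aset x)) := by
      rw [← heq]; exact Finset.mem_insert_self _ _
    rcases Finset.mem_insert.1 hm with he | hm'
    · have := hgood (show Sum.elim x y (Sum.inr (0, ε 0))
          = Sum.elim x y (Sum.inr (0, ε' 0)) from he)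
      have := Sum.inr_injective this
      exact (Prod.ext_iff.1 this).2
    · rcases Finset.mem_insert.1 hm' with he | hm''
      · exact absurd he (y_ne_y hgood (by simp [Prod.ext_iff]))
      · exact absurd hm'' (y_ne_Aset hgood _)
  have h1 : ε 1 = ε' 1 := by
    have hm : y (1, ε 1) ∈ insert (y (0, ε' 0)) (insert (y (1, ε' 1)) (Aset x)) := by
      rw [← heq]
      exact Finset.mem_insert_of_mem (Finset.mem_insert_self _ _)
    rcases Finset.mem_insert.1 hm with he | hm'
    · exact absurd he (y_ne_y hgood (by simp [Prod.ext_iff]))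
    · rcases Finset.mem_insert.1 hm' with he | hm''
      · have := hgood (show Sum.elim x y (Sum.inr (1, ε 1))
            = Sum.elim x y (Sum.inr (1, ε' 1)) from he)
        have := Sum.inr_injective this
        exact (Prod.ext_iff.1 this).2
      · exact absurd hm'' (y_ne_Aset hgood _)
  funext i
  fin_cases i
  · exact h0
  · exact h1

lemma octSet_good (hk : 3 ≤ k) (hgood : Function.Injective (Sum.elim x y)) :
    octSet k 2 x y
      = Finset.image (fun ε : Fin 2 → Fin 2 => Bset x (y (0, ε 0)) (y (1, ε 1)))
          Finset.univ := by
  unfold octSet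
  have h1 : Finset.image (fun ε : Fin 2 → Fin 2 =>
        Finset.image (octTuple k 2 x y ε) Finset.univ) Finset.univ
      = Finset.image (fun ε : Fin 2 → Fin 2 => Bset x (y (0, ε 0)) (y (1, ε 1)))
          Finset.univ := by
    refine Finset.image_congr fun ε _ => octTuple_image hk x y ε
  rw [h1]
  refine Finset.filter_true_of_mem fun T hT => ?_
  obtain ⟨ε, _, rfl⟩ := Finset.mem_image.1 hT
  exact card_Bset_good hk hgood ε

lemma term_good (hk : 3 ≤ k) (hgood : Function.Injective (Sum.elim x y)) :
    (-1 : ℝ) ^ ((octSet k 2 x y ∩ Hcd k n).card)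
      = ∏ ε : Fin 2 → Fin 2, chi k n (Bset x (y (0, ε 0)) (y (1, ε 1))) := by
  classical
  rw [octSet_good hk hgood]
  set F := fun ε : Fin 2 → Fin 2 => Bset x (y (0, ε 0)) (y (1, ε 1)) with hF
  have hinter : (Finset.image F Finset.univ) ∩ Hcd k n
      = Finset.image F (Finset.univ.filter (fun ε => F ε ∈ Hcd k n)) := by
    ext T
    simp only [Finset.mem_inter, Finset.mem_image, Finset.mem_filter, Finset.mem_univ,
      true_and]
    constructor
    · rintro ⟨⟨ε, rfl⟩, hT⟩
      exact ⟨ε, ⟨hT, rfl⟩⟩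
    · rintro ⟨ε, hε, rfl⟩
      exact ⟨⟨ε, rfl⟩, hε⟩
  rw [hinter, Finset.card_image_of_injective _ (Bfun_inj hgood)]
  have hprod : ∏ ε : Fin 2 → Fin 2, chi k n (F ε)
      = (∏ ε ∈ Finset.univ.filter (fun ε => F ε ∈ Hcd k n), (-1 : ℝ))
        * ∏ ε ∈ Finset.univ.filter (fun ε => ¬ (F ε ∈ Hcd k n)), (1 : ℝ) := by
    rw [← Finset.prod_ite]
    rfl
  rw [hprod, Finset.prod_const, Finset.prod_const, one_pow, mul_one]

end GoodCase

lemma chi_mul_ge (k n : ℕ) (S T : Finset (Fin n)) : -1 ≤ chi k n S * chi k n T := by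
  have h1 := chi_abs k n S
  have h2 := chi_abs k n T
  have : |chi k n S * chi k n T| = 1 := by rw [abs_mul, h1, h2, mul_one]
  linarith [neg_abs_le (chi k n S * chi k n T), this.ge, this.le]

lemma sum_y_eq (k n : ℕ) (x : Fin (k - 2) → Fin n) :
    ∑ y : Fin 2 × Fin 2 → Fin n,
        ∏ ε : Fin 2 → Fin 2, chi k n (Bset x (y (0, ε 0)) (y (1, ε 1)))
      = ∑ u : Fin 2 → Fin n,
          (∑ v : Fin n, chi k n (Bset x (u 0) v) * chi k n (Bset x (u 1) v)) ^ 2 := by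
  classical
  have step1 : ∑ y : Fin 2 × Fin 2 → Fin n,
        ∏ ε : Fin 2 → Fin 2, chi k n (Bset x (y (0, ε 0)) (y (1, ε 1)))
      = ∑ q : (Fin 2 → Fin n) × (Fin 2 → Fin n),
          ∏ ε : Fin 2 → Fin 2, chi k n (Bset x (q.1 (ε 0)) (q.2 (ε 1))) := by
    refine Fintype.sum_equiv
      ((Equiv.curry (Fin 2) (Fin 2) (Fin n)).trans (piFinTwoEquiv (fun _ => Fin 2 → Fin n)))
      _ _ (fun y => rfl)
  rw [step1, Fintype.sum_prod_type]
  refine Finset.sum_congr rfl fun u _ => ?_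
  have step3 : ∀ w : Fin 2 → Fin n,
      ∏ ε : Fin 2 → Fin 2, chi k n (Bset x (u (ε 0)) (w (ε 1)))
        = ∏ b : Fin 2, ∏ a : Fin 2, chi k n (Bset x (u a) (w b)) := by
    intro w
    have e1 : ∏ ε : Fin 2 → Fin 2, chi k n (Bset x (u (ε 0)) (w (ε 1)))
        = ∏ p : Fin 2 × Fin 2, chi k n (Bset x (u p.1) (w p.2)) := by
      refine Fintype.prod_equiv (piFinTwoEquiv (fun _ => Fin 2)) _ _ (fun ε => rfl)
    rw [e1, Fintype.prod_prod_type]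
    exact Finset.prod_comm
  calc ∑ w : Fin 2 → Fin n, ∏ ε : Fin 2 → Fin 2, chi k n (Bset x (u (ε 0)) (w (ε 1)))
      = ∑ w : Fin 2 → Fin n, ∏ b : Fin 2, ∏ a : Fin 2, chi k n (Bset x (u a) (w b)) := by
        exact Finset.sum_congr rfl fun w _ => step3 w
    _ = ∏ _b : Fin 2, ∑ v : Fin n, ∏ a : Fin 2, chi k n (Bset x (u a) v) := by
        rw [Finset.prod_univ_sum (fun _ : Fin 2 => (Finset.univ : Finset (Fin n)))
          (fun b v => ∏ a : Fin 2, chi k n (Bset x (u a) v))]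
        rw [Fintype.piFinset_univ]
    _ = (∑ v : Fin n, ∏ a : Fin 2, chi k n (Bset x (u a) v)) ^ 2 := by
        rw [Finset.prod_const, Finset.card_univ, Fintype.card_fin]
    _ = (∑ v : Fin n, chi k n (Bset x (u 0) v) * chi k n (Bset x (u 1) v)) ^ 2 := by
        congr 1
        exact Finset.sum_congr rfl fun v _ => Fin.prod_univ_two _

lemma inner_ge (k n : ℕ) {x : Fin (k - 2) → Fin n} {u : Fin 2 → Fin n}
    (hx : ∀ i, 2 * ((x i : ℕ)) < n) (hu : ∀ a, 7 * n ≤ 8 * ((u a : ℕ))) :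
    (3 * (n : ℝ) - 7) / 4
      ≤ ∑ v : Fin n, chi k n (Bset x (u 0) v) * chi k n (Bset x (u 1) v) := by
  have hnpos : 0 < n := (u 0).pos
  have hlt : ∀ (a : Fin 2) (v : Fin n), 8 * (v : ℕ) < 7 * n →
      ∀ w ∈ insert v (Aset x), w < u a := by
    intro a v hv w hw
    rcases Finset.mem_insert.1 hw with rfl | hw'
    · have := hu a
      have : (w : ℕ) < ((u a : ℕ)) := by omega
      exact this
    · obtain ⟨j, _, rfl⟩ := Finset.mem_image.1 hw'
      have h1 := hx j
      have h2 := hu a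
      have : ((x j : ℕ)) < ((u a : ℕ)) := by omega
      exact this
  have hpt : ∀ v : Fin n, (if 8 * (v : ℕ) < 7 * n then (1 : ℝ) else -1)
      ≤ chi k n (Bset x (u 0) v) * chi k n (Bset x (u 1) v) := by
    intro v
    by_cases hv : 8 * (v : ℕ) < 7 * n
    · rw [if_pos hv, linkprod_one k n (hlt 0 v hv) (hlt 1 v hv)]
    · rw [if_neg hv]
      exact chi_mul_ge k n _ _
  refine le_trans ?_ (Finset.sum_le_sum fun v _ => hpt v)
  -- count
  have hre : ∑ v : Fin n, (if 8 * (v : ℕ) < 7 * n then (1 : ℝ) else -1)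
      = ∑ i ∈ Finset.range n, (if 8 * i < 7 * n then (1 : ℝ) else -1) :=
    Fin.sum_univ_eq_sum_range (fun i => (if 8 * i < 7 * n then (1 : ℝ) else -1)) n
  rw [hre]
  set T := (Finset.range n).filter (fun i => 8 * i < 7 * n) with hT
  have hsplit : ∑ i ∈ Finset.range n, (if 8 * i < 7 * n then (1 : ℝ) else -1)
      = (T.card : ℝ) * 1 + (((Finset.range n).filter (fun i => ¬ (8 * i < 7 * n))).card : ℝ)
          * (-1) := by
    rw [Finset.sum_ite, Finset.sum_const, Finset.sum_const, nsmul_eq_mul, nsmul_eq_mul]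
  have hcards : T.card + ((Finset.range n).filter (fun i => ¬ (8 * i < 7 * n))).card = n := by
    rw [Finset.card_filter_add_card_filter_not, Finset.card_range]
  set q := (7 * n) / 8 with hq
  have hsub : Finset.range q ⊆ T := by
    intro i hi
    rw [Finset.mem_range] at hi
    have h8q : 8 * q ≤ 7 * n := by
      rw [hq, mul_comm]
      exact Nat.div_mul_le_self (7 * n) 8
    rw [hT, Finset.mem_filter, Finset.mem_range]
    omega
  have hqT : q ≤ T.card := le_trans (by rw [Finset.card_range]) (Finset.card_le_card hsub)
  have hq7 : 7 * n ≤ 8 * q + 7 := by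
    have := Nat.lt_div_mul_add (a := 7 * n) (b := 8) (by norm_num)
    omega
  rw [hsplit]
  have c1 : (q : ℝ) ≤ (T.card : ℝ) := by exact_mod_cast hqT
  have c2 : (7 : ℝ) * n ≤ 8 * q + 7 := by exact_mod_cast hq7
  have c3 : ((T.card : ℕ) : ℝ)
      + (((Finset.range n).filter (fun i => ¬ (8 * i < 7 * n))).card : ℝ) = (n : ℝ) := by
    exact_mod_cast hcards
  linarith

lemma pow_le_dF (n : ℕ) : ∀ m : ℕ, n ^ m ≤ n.descFactorial m + m * m * n ^ (m - 1) := by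
  intro m
  induction m with
  | zero => simp
  | succ m ih =>
    rcases Nat.eq_zero_or_pos m with rfl | hm
    · simpa using Nat.le_succ n
    · have h2 : n * n ^ (m - 1) = n ^ m := by
        rw [← pow_succ']
        congr 1
        omega
      have h3 : n * n.descFactorial m
          ≤ n.descFactorial (m + 1) + m * n.descFactorial m := by
        rw [Nat.descFactorial_succ]
        calc n * n.descFactorial m ≤ ((n - m) + m) * n.descFactorial m :=
              Nat.mul_le_mul_right _ (by omega)
          _ = (n - m) * n.descFactorial m + m * n.descFactorial m := by ring
      have h4 : n.descFactorial m ≤ n ^ m := Nat.descFactorial_le_pow n m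
      have h5 : m * n.descFactorial m ≤ m * n ^ m := Nat.mul_le_mul_left m h4
      calc n ^ (m + 1) = n * n ^ m := by ring
        _ ≤ n * (n.descFactorial m + m * m * n ^ (m - 1)) := Nat.mul_le_mul_left n ih
        _ = n * n.descFactorial m + m * m * (n * n ^ (m - 1)) := by ring
        _ = n * n.descFactorial m + m * m * n ^ m := by rw [h2]
        _ ≤ (n.descFactorial (m + 1) + m * n.descFactorial m) + m * m * n ^ m := by omega
        _ ≤ n.descFactorial (m + 1) + (m + 1) * (m + 1) * n ^ ((m + 1) - 1) := by
            simp only [Nat.add_sub_cancel]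
            nlinarith [h5]

lemma card_bad (k n : ℕ) (hk : 3 ≤ k) :
    (Finset.univ.filter (fun p : (Fin (k - 2) → Fin n) × (Fin 2 × Fin 2 → Fin n) =>
        ¬ Function.Injective (Sum.elim p.1 p.2))).card
      ≤ (k + 2) * (k + 2) * n ^ (k + 1) := by
  classical
  have e1 : (Finset.univ.filter (fun p : (Fin (k - 2) → Fin n) × (Fin 2 × Fin 2 → Fin n) =>
        ¬ Function.Injective (Sum.elim p.1 p.2))).card
      = Fintype.card {p : (Fin (k - 2) → Fin n) × (Fin 2 × Fin 2 → Fin n) //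
          ¬ Function.Injective (Sum.elim p.1 p.2)} := (Fintype.card_subtype _).symm
  have e2 : {p : (Fin (k - 2) → Fin n) × (Fin 2 × Fin 2 → Fin n) //
          ¬ Function.Injective (Sum.elim p.1 p.2)}
      ≃ {z : (Fin (k - 2)) ⊕ (Fin 2 × Fin 2) → Fin n // ¬ Function.Injective z} := by
    refine ((Equiv.sumArrowEquivProdArrow (Fin (k - 2)) (Fin 2 × Fin 2)
      (Fin n)).symm.subtypeEquiv ?_)
    intro p
    rfl
  have e3 : Fintype.card {z : (Fin (k - 2)) ⊕ (Fin 2 × Fin 2) → Fin n //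
        ¬ Function.Injective z}
      = Fintype.card ((Fin (k - 2)) ⊕ (Fin 2 × Fin 2) → Fin n)
        - Fintype.card {z : (Fin (k - 2)) ⊕ (Fin 2 × Fin 2) → Fin n //
            Function.Injective z} := Fintype.card_subtype_compl _
  have e4 : Fintype.card {z : (Fin (k - 2)) ⊕ (Fin 2 × Fin 2) → Fin n //
        Function.Injective z} = n.descFactorial (k + 2) := by
    rw [Fintype.card_congr (Equiv.subtypeInjectiveEquivEmbedding _ _),
      Fintype.card_embedding_eq]
    congr 1
    · rw [Fintype.card_fin]
    · simp only [Fintype.card_sum, Fintype.card_prod, Fintype.card_fin]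
      omega
  have e5 : Fintype.card ((Fin (k - 2)) ⊕ (Fin 2 × Fin 2) → Fin n) = n ^ (k + 2) := by
    rw [Fintype.card_fun]
    simp only [Fintype.card_sum, Fintype.card_prod, Fintype.card_fin]
    congr 1
    omega
  rw [e1, Fintype.card_congr e2, e3, e4, e5]
  have := pow_le_dF n (k + 2)
  have h6 : (k + 2) - 1 = k + 1 := by omega
  rw [h6] at this
  omega

lemma card_filter_fin (n : ℕ) (p : ℕ → Prop) [DecidablePred p] :
    (Finset.univ.filter (fun v : Fin n => p (v : ℕ))).card
      = ((Finset.range n).filter p).card := by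
  rw [Finset.card_filter, Finset.card_filter,
    Fin.sum_univ_eq_sum_range (fun i => if p i then 1 else 0) n]

lemma card_piFinset_filter {m n : ℕ} (p : ℕ → Prop) [DecidablePred p] :
    (Finset.univ.filter (fun x : Fin m → Fin n => ∀ i, p ((x i : ℕ)))).card
      = (Finset.univ.filter (fun v : Fin n => p (v : ℕ))).card ^ m := by
  classical
  have e1 : Finset.univ.filter (fun x : Fin m → Fin n => ∀ i, p ((x i : ℕ)))
      = Fintype.piFinset (fun _ : Fin m => Finset.univ.filter (fun v : Fin n => p (v : ℕ))) := by
    ext z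
    simp [Fintype.mem_piFinset]
  rw [e1, Fintype.card_piFinset]
  rw [Finset.prod_const, Finset.card_univ, Fintype.card_fin]

lemma card_bot_ge (n : ℕ) :
    (n : ℝ) / 4 ≤ ((Finset.univ.filter (fun v : Fin n => 2 * (v : ℕ) < n)).card : ℝ)
      ∨ n < 2 := by
  by_cases hn : n < 2
  · exact Or.inr hn
  · left
    push_neg at hn
    rw [card_filter_fin n (fun i => 2 * i < n)]
    have hsub : Finset.range (n / 2) ⊆ (Finset.range n).filter (fun i => 2 * i < n) := by
      intro i hi
      rw [Finset.mem_range] at hi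
      have hd : n / 2 * 2 ≤ n := Nat.div_mul_le_self n 2
      rw [Finset.mem_filter, Finset.mem_range]
      omega
    have h1 : n / 2 ≤ ((Finset.range n).filter (fun i => 2 * i < n)).card :=
      le_trans (by rw [Finset.card_range]) (Finset.card_le_card hsub)
    have h2 : n ≤ 2 * (n / 2) + 1 := by
      have := Nat.lt_div_mul_add (a := n) (b := 2) (by norm_num)
      omega
    have h4 : n ≤ 4 * ((Finset.range n).filter (fun i => 2 * i < n)).card := by omega
    have c1 : (n : ℝ) ≤ 4 * (((Finset.range n).filter (fun i => 2 * i < n)).card : ℝ) := by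
      exact_mod_cast h4
    linarith

lemma card_top_ge {n : ℕ} (hn : 16 ≤ n) :
    (n : ℝ) / 16 ≤ ((Finset.univ.filter (fun v : Fin n => 7 * n ≤ 8 * (v : ℕ))).card : ℝ) := by
  rw [card_filter_fin n (fun i => 7 * n ≤ 8 * i)]
  set q := (7 * n) / 8 with hq
  have hsub : (Finset.range n).filter (fun i => ¬ (7 * n ≤ 8 * i)) ⊆ Finset.range (q + 1) := by
    intro i hi
    rw [Finset.mem_filter] at hi
    rw [Finset.mem_range]
    have h8 : 8 * i < 7 * n := by omega
    have : i ≤ q := Nat.le_div_iff_mul_le (by norm_num) |>.2 (by omega)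
    omega
  have h1 : ((Finset.range n).filter (fun i => ¬ (7 * n ≤ 8 * i))).card ≤ q + 1 :=
    le_trans (Finset.card_le_card hsub) (by rw [Finset.card_range])
  have h2 : ((Finset.range n).filter (fun i => 7 * n ≤ 8 * i)).card
      + ((Finset.range n).filter (fun i => ¬ (7 * n ≤ 8 * i))).card = n := by
    rw [Finset.card_filter_add_card_filter_not, Finset.card_range]
  have h3 : n - (q + 1) ≤ ((Finset.range n).filter (fun i => 7 * n ≤ 8 * i)).card := by omega
  have hq8 : 8 * q ≤ 7 * n := by
    rw [hq, mul_comm]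
    exact Nat.div_mul_le_self (7 * n) 8
  -- n - q - 1 ≥ n/16 when 16 ≤ n : 8(n − q − 1) ≥ 8n − 7n − 8 = n − 8 ≥ n/2 ≥ 16·(n/16)… do cast
  have h4 : n ≤ 16 * ((Finset.range n).filter (fun i => 7 * n ≤ 8 * i)).card := by omega
  have c1 : (n : ℝ)
      ≤ 16 * (((Finset.range n).filter (fun i => 7 * n ≤ 8 * i)).card : ℝ) := by
    exact_mod_cast h4
  linarith

lemma devSum_ge (k : ℕ) (hk : 3 ≤ k) {n : ℕ} (hn : 16 ≤ n) :
    ((1 : ℝ) / 4) ^ (k - 2) / 1024 * (n : ℝ) ^ (k + 2)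
        - 2 * (((k + 2) * (k + 2) : ℕ) : ℝ) * (n : ℝ) ^ (k + 1)
      ≤ devSum k 2 (Hcd k n) := by
  classical
  set P : (Fin (k - 2) → Fin n) → (Fin 2 × Fin 2 → Fin n) → ℝ :=
    fun x y => ∏ ε : Fin 2 → Fin 2, chi k n (Bset x (y (0, ε 0)) (y (1, ε 1))) with hP
  have habs_term : ∀ (x : Fin (k - 2) → Fin n) (y : Fin 2 × Fin 2 → Fin n),
      (-1 : ℝ) ≤ (-1 : ℝ) ^ ((octSet k 2 x y ∩ Hcd k n).card) := by
    intro x y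
    have h1 : |(-1 : ℝ) ^ ((octSet k 2 x y ∩ Hcd k n).card)| = 1 := by
      rw [abs_pow, abs_neg, abs_one, one_pow]
    have h2 := neg_abs_le ((-1 : ℝ) ^ ((octSet k 2 x y ∩ Hcd k n).card))
    rw [h1] at h2
    exact h2
  have hP_le : ∀ x y, P x y ≤ 1 := by
    intro x y
    have h1 : |P x y| = 1 := by
      rw [hP, Finset.abs_prod]
      simp_rw [chi_abs]
      exact Finset.prod_const_one
    have h2 := le_abs_self (P x y)
    rw [h1] at h2
    exact h2
  -- Step A : devSum ≥ ∑ P − 2·(bad count)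
  have hdev_eq : devSum k 2 (Hcd k n)
      = ∑ p : (Fin (k - 2) → Fin n) × (Fin 2 × Fin 2 → Fin n),
          (-1 : ℝ) ^ ((octSet k 2 p.1 p.2 ∩ Hcd k n).card) := by
    rw [devSum]
    exact (Fintype.sum_prod_type' _).symm
  have hPsum_eq : ∑ p : (Fin (k - 2) → Fin n) × (Fin 2 × Fin 2 → Fin n), P p.1 p.2
      = ∑ x : Fin (k - 2) → Fin n, ∑ y : Fin 2 × Fin 2 → Fin n, P x y :=
    Fintype.sum_prod_type' _
  have hstepA : -2 * (((k + 2) * (k + 2) : ℕ) : ℝ) * (n : ℝ) ^ (k + 1)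
      ≤ ∑ p : (Fin (k - 2) → Fin n) × (Fin 2 × Fin 2 → Fin n),
          ((-1 : ℝ) ^ ((octSet k 2 p.1 p.2 ∩ Hcd k n).card) - P p.1 p.2) := by
    have hpt : ∀ p : (Fin (k - 2) → Fin n) × (Fin 2 × Fin 2 → Fin n),
        (if Function.Injective (Sum.elim p.1 p.2) then (0 : ℝ) else -2)
          ≤ (-1 : ℝ) ^ ((octSet k 2 p.1 p.2 ∩ Hcd k n).card) - P p.1 p.2 := by
      intro p
      by_cases hinj : Function.Injective (Sum.elim p.1 p.2)
      · rw [if_pos hinj, term_good hk hinj]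
        simp [hP]
      · rw [if_neg hinj]
        have h1 := habs_term p.1 p.2
        have h2 := hP_le p.1 p.2
        linarith
    refine le_trans ?_ (Finset.sum_le_sum fun p _ => hpt p)
    rw [← Finset.sum_filter_add_sum_filter_not Finset.univ
      (fun p : (Fin (k - 2) → Fin n) × (Fin 2 × Fin 2 → Fin n) =>
        Function.Injective (Sum.elim p.1 p.2))]
    have hz : ∑ p ∈ Finset.univ.filter
        (fun p : (Fin (k - 2) → Fin n) × (Fin 2 × Fin 2 → Fin n) =>
          Function.Injective (Sum.elim p.1 p.2)),
        (if Function.Injective (Sum.elim p.1 p.2) then (0 : ℝ) else -2) = 0 := by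
      refine Finset.sum_eq_zero fun p hp => ?_
      rw [if_pos (Finset.mem_filter.1 hp).2]
    have hneg : ∑ p ∈ Finset.univ.filter
        (fun p : (Fin (k - 2) → Fin n) × (Fin 2 × Fin 2 → Fin n) =>
          ¬ Function.Injective (Sum.elim p.1 p.2)),
        (if Function.Injective (Sum.elim p.1 p.2) then (0 : ℝ) else -2)
        = ((Finset.univ.filter
            (fun p : (Fin (k - 2) → Fin n) × (Fin 2 × Fin 2 → Fin n) =>
              ¬ Function.Injective (Sum.elim p.1 p.2))).card : ℝ) * (-2) := by
      rw [Finset.sum_congr rfl (fun p hp => if_neg (Finset.mem_filter.1 hp).2),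
        Finset.sum_const, nsmul_eq_mul]
    rw [hz, hneg, zero_add]
    have hcb : ((Finset.univ.filter
        (fun p : (Fin (k - 2) → Fin n) × (Fin 2 × Fin 2 → Fin n) =>
          ¬ Function.Injective (Sum.elim p.1 p.2))).card : ℝ)
        ≤ (((k + 2) * (k + 2) : ℕ) : ℝ) * (n : ℝ) ^ (k + 1) := by
      have h1 := card_bad k n hk
      have h2 : ((Finset.univ.filter
          (fun p : (Fin (k - 2) → Fin n) × (Fin 2 × Fin 2 → Fin n) =>
            ¬ Function.Injective (Sum.elim p.1 p.2))).card : ℝ)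
          ≤ (((k + 2) * (k + 2) * n ^ (k + 1) : ℕ) : ℝ) := by exact_mod_cast h1
      refine h2.trans (le_of_eq ?_)
      push_cast
      ring
    nlinarith [hcb]
  -- Step B : lower bound for ∑ P
  set Xg := Finset.univ.filter (fun x : Fin (k - 2) → Fin n => ∀ i, 2 * ((x i : ℕ)) < n)
    with hXg
  set Ug := Finset.univ.filter (fun u : Fin 2 → Fin n => ∀ a, 7 * n ≤ 8 * ((u a : ℕ)))
    with hUg
  have hQ : ∀ x : Fin (k - 2) → Fin n,
      ∑ y : Fin 2 × Fin 2 → Fin n, P x y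
        = ∑ u : Fin 2 → Fin n,
            (∑ v : Fin n, chi k n (Bset x (u 0) v) * chi k n (Bset x (u 1) v)) ^ 2 :=
    fun x => sum_y_eq k n x
  have hQ_nonneg : ∀ x : Fin (k - 2) → Fin n,
      0 ≤ ∑ y : Fin 2 × Fin 2 → Fin n, P x y := by
    intro x
    rw [hQ x]
    exact Finset.sum_nonneg fun u _ => sq_nonneg _
  have hQx : ∀ x ∈ Xg, (Ug.card : ℝ) * ((n : ℝ) / 2) ^ 2
      ≤ ∑ y : Fin 2 × Fin 2 → Fin n, P x y := by
    intro x hx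
    have hx' : ∀ i, 2 * ((x i : ℕ)) < n := (Finset.mem_filter.1 hx).2
    rw [hQ x]
    have hsub : ∑ u ∈ Ug,
        (∑ v : Fin n, chi k n (Bset x (u 0) v) * chi k n (Bset x (u 1) v)) ^ 2
        ≤ ∑ u : Fin 2 → Fin n,
            (∑ v : Fin n, chi k n (Bset x (u 0) v) * chi k n (Bset x (u 1) v)) ^ 2 :=
      Finset.sum_le_sum_of_subset_of_nonneg (Finset.subset_univ _)
        (fun u _ _ => sq_nonneg _)
    refine le_trans ?_ hsub
    have hptu : ∀ u ∈ Ug, ((n : ℝ) / 2) ^ 2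
        ≤ (∑ v : Fin n, chi k n (Bset x (u 0) v) * chi k n (Bset x (u 1) v)) ^ 2 := by
      intro u hu
      have hu' : ∀ a, 7 * n ≤ 8 * ((u a : ℕ)) := (Finset.mem_filter.1 hu).2
      have h1 := inner_ge k n hx' hu'
      have hn' : (16 : ℝ) ≤ (n : ℝ) := by exact_mod_cast hn
      have h2 : (n : ℝ) / 2 ≤ (3 * (n : ℝ) - 7) / 4 := by linarith
      have h3 : (0 : ℝ) ≤ (n : ℝ) / 2 := by positivity
      exact pow_le_pow_left₀ h3 (by linarith) 2
    have := Finset.card_nsmul_le_sum Ug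
      (fun u => (∑ v : Fin n, chi k n (Bset x (u 0) v) * chi k n (Bset x (u 1) v)) ^ 2)
      (((n : ℝ) / 2) ^ 2) hptu
    rwa [nsmul_eq_mul] at this
  have hXsum : (Xg.card : ℝ) * ((Ug.card : ℝ) * ((n : ℝ) / 2) ^ 2)
      ≤ ∑ x : Fin (k - 2) → Fin n, ∑ y : Fin 2 × Fin 2 → Fin n, P x y := by
    have hsub : ∑ x ∈ Xg, ∑ y : Fin 2 × Fin 2 → Fin n, P x y
        ≤ ∑ x : Fin (k - 2) → Fin n, ∑ y : Fin 2 × Fin 2 → Fin n, P x y :=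
      Finset.sum_le_sum_of_subset_of_nonneg (Finset.subset_univ _)
        (fun x _ _ => hQ_nonneg x)
    refine le_trans ?_ hsub
    have := Finset.card_nsmul_le_sum Xg
      (fun x => ∑ y : Fin 2 × Fin 2 → Fin n, P x y)
      ((Ug.card : ℝ) * ((n : ℝ) / 2) ^ 2) hQx
    rwa [nsmul_eq_mul] at this
  -- cards
  have hXcard : ((n : ℝ) / 4) ^ (k - 2) ≤ (Xg.card : ℝ) := by
    rw [hXg, card_piFinset_filter (fun m => 2 * m < n)]
    have hb := card_bot_ge n
    rcases hb with hb | hb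
    · have : (0 : ℝ) ≤ (n : ℝ) / 4 := by positivity
      calc ((n : ℝ) / 4) ^ (k - 2)
          ≤ (((Finset.univ.filter (fun v : Fin n => 2 * (v : ℕ) < n)).card : ℝ)) ^ (k - 2) :=
            pow_le_pow_left₀ this hb _
        _ = (((Finset.univ.filter (fun v : Fin n => 2 * (v : ℕ) < n)).card ^ (k - 2) : ℕ) : ℝ) := by
            push_cast; ring
    · omega
  have hUcard : ((n : ℝ) / 16) ^ 2 ≤ (Ug.card : ℝ) := by
    rw [hUg, card_piFinset_filter (fun m => 7 * n ≤ 8 * m)]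
    have ht := card_top_ge hn
    have : (0 : ℝ) ≤ (n : ℝ) / 16 := by positivity
    calc ((n : ℝ) / 16) ^ 2
        ≤ (((Finset.univ.filter (fun v : Fin n => 7 * n ≤ 8 * (v : ℕ))).card : ℝ)) ^ 2 :=
          pow_le_pow_left₀ this ht _
      _ = (((Finset.univ.filter (fun v : Fin n => 7 * n ≤ 8 * (v : ℕ))).card ^ 2 : ℕ) : ℝ) := by
          push_cast; ring
  -- combine
  have hmain : ((n : ℝ) / 4) ^ (k - 2) * (((n : ℝ) / 16) ^ 2 * ((n : ℝ) / 2) ^ 2)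
      ≤ ∑ x : Fin (k - 2) → Fin n, ∑ y : Fin 2 × Fin 2 → Fin n, P x y := by
    refine le_trans ?_ hXsum
    have h1 : (0 : ℝ) ≤ ((n : ℝ) / 2) ^ 2 := sq_nonneg _
    have h2 : (0 : ℝ) ≤ ((n : ℝ) / 16) ^ 2 := sq_nonneg _
    have h3 : (0 : ℝ) ≤ ((n : ℝ) / 4) ^ (k - 2) := by positivity
    have h4 : ((n : ℝ) / 16) ^ 2 * ((n : ℝ) / 2) ^ 2
        ≤ (Ug.card : ℝ) * ((n : ℝ) / 2) ^ 2 :=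
      mul_le_mul_of_nonneg_right hUcard h1
    calc ((n : ℝ) / 4) ^ (k - 2) * (((n : ℝ) / 16) ^ 2 * ((n : ℝ) / 2) ^ 2)
        ≤ ((n : ℝ) / 4) ^ (k - 2) * ((Ug.card : ℝ) * ((n : ℝ) / 2) ^ 2) :=
          mul_le_mul_of_nonneg_left h4 h3
      _ ≤ (Xg.card : ℝ) * ((Ug.card : ℝ) * ((n : ℝ) / 2) ^ 2) := by
          refine mul_le_mul_of_nonneg_right hXcard ?_
          positivity
  have hkey : ((1 : ℝ) / 4) ^ (k - 2) / 1024 * (n : ℝ) ^ (k + 2)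
      = ((n : ℝ) / 4) ^ (k - 2) * (((n : ℝ) / 16) ^ 2 * ((n : ℝ) / 2) ^ 2) := by
    have hsplit : (n : ℝ) ^ (k + 2) = (n : ℝ) ^ (k - 2) * (n : ℝ) ^ 4 := by
      rw [← pow_add]
      congr 1
      omega
    have hnq : ((n : ℝ) / 4) ^ (k - 2) = (n : ℝ) ^ (k - 2) * ((1 : ℝ) / 4) ^ (k - 2) := by
      rw [← mul_pow]
      congr 1
      ring
    rw [hsplit, hnq]
    ring
  calc ((1 : ℝ) / 4) ^ (k - 2) / 1024 * (n : ℝ) ^ (k + 2)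
        - 2 * (((k + 2) * (k + 2) : ℕ) : ℝ) * (n : ℝ) ^ (k + 1)
      ≤ (∑ x : Fin (k - 2) → Fin n, ∑ y : Fin 2 × Fin 2 → Fin n, P x y)
        + (-2 * (((k + 2) * (k + 2) : ℕ) : ℝ) * (n : ℝ) ^ (k + 1)) := by
        rw [hkey]
        linarith [hmain]
    _ ≤ (∑ p : (Fin (k - 2) → Fin n) × (Fin 2 × Fin 2 → Fin n), P p.1 p.2)
        + ∑ p : (Fin (k - 2) → Fin n) × (Fin 2 × Fin 2 → Fin n),
            ((-1 : ℝ) ^ ((octSet k 2 p.1 p.2 ∩ Hcd k n).card) - P p.1 p.2) := by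
        rw [hPsum_eq]
        linarith [hstepA]
    _ = devSum k 2 (Hcd k n) := by
        rw [hdev_eq, ← Finset.sum_add_distrib]
        refine Finset.sum_congr rfl fun p _ => ?_
        ring

lemma Hcd_not_Dev (k : ℕ) (hk : 3 ≤ k) : ¬ Dev k 2 (Hcd k) := by
  intro hdev
  rw [Dev, Asymptotics.isLittleO_iff] at hdev
  set c₀ := ((1 : ℝ) / 4) ^ (k - 2) / 1024 with hc0
  have hc0pos : 0 < c₀ := by rw [hc0]; positivity
  have hev := hdev (half_pos hc0pos)
  rw [Filter.eventually_atTop] at hev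
  obtain ⟨N, hN⟩ := hev
  set n := max N (max 16 (⌈4 * (((k + 2) * (k + 2) : ℕ) : ℝ) / c₀⌉₊ + 1)) with hn
  have h16 : 16 ≤ n := le_trans (le_max_left _ _) (le_max_right _ _)
  have hNn : N ≤ n := le_max_left _ _
  have hnpos : (0 : ℝ) < (n : ℝ) := by
    have : (16 : ℝ) ≤ (n : ℝ) := by exact_mod_cast h16
    linarith
  have hbig : 4 * (((k + 2) * (k + 2) : ℕ) : ℝ) / c₀ < (n : ℝ) := by
    have h1 : ⌈4 * (((k + 2) * (k + 2) : ℕ) : ℝ) / c₀⌉₊ + 1 ≤ n :=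
      le_trans (le_max_right _ _) (le_max_right _ _)
    have h2 : (⌈4 * (((k + 2) * (k + 2) : ℕ) : ℝ) / c₀⌉₊ : ℝ) + 1 ≤ (n : ℝ) := by
      exact_mod_cast h1
    have h3 := Nat.le_ceil (4 * (((k + 2) * (k + 2) : ℕ) : ℝ) / c₀)
    linarith
  have hlow := devSum_ge k hk h16
  have hup := hN n hNn
  rw [Real.norm_eq_abs, Real.norm_eq_abs] at hup
  have hup2 : devSum k 2 (Hcd k n) ≤ c₀ / 2 * (n : ℝ) ^ (k + 2) := by
    have h1 := le_abs_self (devSum k 2 (Hcd k n))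
    have h2 : |(n : ℝ) ^ (k + 2)| = (n : ℝ) ^ (k + 2) := abs_of_nonneg (by positivity)
    rw [h2] at hup
    linarith
  -- contradiction
  have hpow : (n : ℝ) ^ (k + 2) = (n : ℝ) ^ (k + 1) * (n : ℝ) := by rw [pow_succ]
  have hppos : (0 : ℝ) < (n : ℝ) ^ (k + 1) := by positivity
  have hbig2 : 4 * (((k + 2) * (k + 2) : ℕ) : ℝ) < c₀ * (n : ℝ) := by
    rw [div_lt_iff₀ hc0pos] at hbig
    linarith [hbig]
  nlinarith [hlow, hup2, hbig2, hppos, hpow, mul_pos hppos hnpos]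

end CDnotDev

/-- some `k`-uniform sequence satisfies `CD_{1/2}(k-2)` but fails `Dev(2)`. -/
theorem cd_not_implies_dev (k : ℕ) (hk : 3 ≤ k) :
    ∃ H : HSeq, UniformSeq k H ∧ CD k (1/2 : ℝ) (k - 2) H ∧ ¬ Dev k 2 H :=
  ⟨CDnotDev.Hcd k, CDnotDev.Hcd_uniform k, CDnotDev.Hcd_CD k hk, CDnotDev.Hcd_not_Dev k hk⟩
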